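/- Decryption correctness under the paper's noise bound ‖e_ct‖ < q/(2t): Let q and t be positive integers with t dividing q and Λ = q/t. Then for all integers x and e with 2·t·|e| < q, the nearest-integer rounding of the rational number t·(Λ·x + e)/q equals x. In particular, a BFV ciphertext whose noise has all coefficients of absolute value less than q/(2t) is correctly decrypted. -/

import Mathlib

/-- Decryption correctness under the noise bound `‖e_ct‖ < q/(2t)`: if `t` divides `q`,
`Λ = q / t`, and `2 * t * |e| < q`, then the nearest-integer rounding of
`t * (Λ*x + e) / q` equals `x`. -/
theorem bfv_decrypt_correct_noise_bound (q t : ℤ) (ht : 0 < t) (hq : 0 < q)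
    (hdvd : t ∣ q) (Λ : ℤ) (hΛ : Λ = q / t)
    (x e : ℤ) (hbound : 2 * t * |e| < q) :
    round ((t * (Λ * x + e) : ℚ) / (q : ℚ)) = x := by
  have htΛ : t * Λ = q := by
    rw [hΛ]; exact Int.mul_ediv_cancel' hdvd
  have hq0 : (q : ℚ) ≠ 0 := by exact_mod_cast hq.ne'
  have hre : ((t * (Λ * x + e) : ℚ)) / (q : ℚ) = (x : ℚ) + (t * e : ℚ) / q := by
    field_simp
    push_cast [← htΛ]
    ring
  rw [hre, add_comm, round_add_intCast]
  have h0 : round ((t * e : ℚ) / q) = 0 := by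
    rw [round_eq_zero_iff]
    have hqpos : (0 : ℚ) < q := by exact_mod_cast hq
    have habs : |(t * e : ℚ) / q| < 1 / 2 := by
      rw [abs_div, abs_of_pos hqpos, div_lt_div_iff₀ hqpos (by norm_num),
        abs_mul, abs_of_pos (show (0:ℚ) < t by exact_mod_cast ht)]
      have h1 : ((2 * t * |e| : ℤ) : ℚ) < q := by exact_mod_cast hbound
      push_cast at h1
      linarith
    constructor
    · linarith [abs_lt.mp habs |>.1]
    · linarith [abs_lt.mp habs |>.2]
  rw [h0, zero_add]
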